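/- One-sided sorted reporting correctness: Let S be a finite set of planar points with distinct x- and distinct y-coordinates. For each point p let V(p) be the list of the min(ℓ, |{p' : p'.y ≤ p.y}|) points p' with p'.y ≤ p.y having smallest x-coordinates, sorted by increasing x. For a threshold c, let p_c be the point of S with maximal y-coordinate among those with y ≤ c. Then for every k ≤ ℓ, the first k elements of V(p_c) are exactly the k points of {p∈S : p.y ≤ c} with smallest x-coordinates, in increasing x order. -/
import Mathlib


/-- **Correctness of one-sided sorted reporting via the lists `V(p)`.**
`S` has pairwise distinct `x`- and `y`-coordinates.  For the query threshold
`c`, `p_c` is the point of `S` of maximal `y`-coordinate among those with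
`y ≤ c`, and `V = V(p_c)` is the list of the `min ℓ |{p' : p'.y ≤ p_c.y}|`
points `p'` with `p'.y ≤ p_c.y` of smallest `x`-coordinates, sorted by
increasing `x`.  Then for every `k ≤ ℓ`, the first `k` elements of `V` are
exactly the `k` points of `{p ∈ S : p.y ≤ c}` with smallest `x`-coordinates,
in increasing `x`-order. -/
theorem stmt16 (S : Finset (ℝ × ℝ))
    (hdist : ∀ p ∈ S, ∀ q ∈ S, p ≠ q → p.1 ≠ q.1 ∧ p.2 ≠ q.2)
    (ℓ : ℕ) (c : ℝ) (pc : ℝ × ℝ)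
    (hpc : pc ∈ S ∧ pc.2 ≤ c ∧ ∀ q ∈ S, q.2 ≤ c → q.2 ≤ pc.2)
    (V : List (ℝ × ℝ))
    (hVsorted : V.Pairwise (fun p q => p.1 < q.1))
    (hVmem : ∀ p ∈ V, p ∈ S ∧ p.2 ≤ pc.2)
    (hVlen : V.length = min ℓ (S.filter (fun p => p.2 ≤ pc.2)).card)
    (hVleft : ∀ q ∈ S, q.2 ≤ pc.2 → q ∉ V → ∀ r ∈ V, r.1 < q.1)
    (k : ℕ) (hk : k ≤ ℓ) :
    (V.take k).Pairwise (fun p q => p.1 < q.1) ∧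
    (∀ p ∈ V.take k, p ∈ S ∧ p.2 ≤ c) ∧
    (V.take k).length = min k (S.filter (fun p => p.2 ≤ c)).card ∧
    ∀ q ∈ S, q.2 ≤ c → q ∉ V.take k → ∀ r ∈ V.take k, r.1 < q.1 := by
  obtain ⟨hpcS, hpcc, hmax⟩ := hpc
  have hfilt : S.filter (fun p => p.2 ≤ pc.2) = S.filter (fun p => p.2 ≤ c) := by
    apply Finset.filter_congr
    intro p hp
    exact ⟨fun h => h.trans hpcc, fun h => hmax p hp h⟩
  have htake : (V.take k).Sublist V := List.take_sublist k V
  refine ⟨hVsorted.sublist htake, ?_, ?_, ?_⟩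
  · intro p hp
    obtain ⟨h1, h2⟩ := hVmem p (htake.mem hp)
    exact ⟨h1, h2.trans hpcc⟩
  · rw [List.length_take, hVlen, ← hfilt]
    omega
  · intro q hqS hqc hqtake r hr
    have hqy : q.2 ≤ pc.2 := hmax q hqS hqc
    by_cases hqV : q ∈ V
    · -- q is in the drop part
      have hsplit := List.take_append_drop k V
      have hpw : List.Pairwise (fun p q => p.1 < q.1) (V.take k ++ V.drop k) := by
        rw [hsplit]; exact hVsorted
      have := (List.pairwise_append.mp hpw).2.2
      have hqd : q ∈ V.drop k := by
        rcases (List.mem_append.mp (by rw [hsplit]; exact hqV)) with h | h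
        · exact absurd h hqtake
        · exact h
      exact this r hr q hqd
    · exact hVleft q hqS hqy hqV r (htake.mem hr)
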